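/- Let m ≥ 1, n = 3m, and let a_1, ..., a_n be positive integers with A = Σ_{i=1}^n a_i and A = mB. Suppose {1, ..., n} can be partitioned into m triples such that Σ_{i ∈ t} a_i = B for every triple t of the partition. Then there exists a tree T on 1 + m + n + A vertices whose status sequence is the multiset consisting of: the value 3A + 7m with multiplicity 1; the value 4A − 2B + 11m − 7 with multiplicity m; for each i ∈ {1, ..., n}, the value 5A − 2B − 2a_i + 15m − 8 with multiplicity 1; and for each i ∈ {1, ..., n}, the value 6A − 2B − 2a_i + 19m − 9 with multiplicity a_i. -/

import Mathlib

/-- The status (transmission index) of a vertex: the sum of distances to all vertices. -/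
noncomputable def SimpleGraph.status {V : Type*} [Fintype V] (G : SimpleGraph V) (v : V) : ℕ :=
  ∑ u : V, G.dist v u

/-- The status sequence of a finite graph, as a multiset of integers. -/
noncomputable def SimpleGraph.statusSequenceZ {V : Type*} [Fintype V] (G : SimpleGraph V) :
    Multiset ℤ :=
  Finset.univ.val.map (fun v => (G.status v : ℤ))


private theorem dist_eq_of_potential {V : Type*} (G : SimpleGraph V) (D : V → V → ℕ)
    (h0 : ∀ x, D x x = 0)
    (hstep : ∀ x y, x ≠ y → ∃ z, G.Adj x z ∧ D z y + 1 = D x y)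
    (hlip : ∀ x z y, G.Adj x z → D x y ≤ D z y + 1) :
    (∀ x y, G.Reachable x y) ∧ (∀ x y, G.dist x y = D x y) := by
  have key : ∀ k x y, D x y = k → ∃ p : G.Walk x y, p.length = D x y := by
    intro k
    induction k using Nat.strong_induction_on with
    | _ k ih =>
      intro x y hk
      by_cases hxy : x = y
      · subst hxy; exact ⟨.nil, by simp [h0]⟩
      · obtain ⟨z, hadj, hz⟩ := hstep x y hxy
        obtain ⟨p, hp⟩ := ih (D z y) (by omega) z y rfl
        exact ⟨.cons hadj p, by simp [hp]; omega⟩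
  have hLB : ∀ x y0 (p : G.Walk x y0), D x y0 ≤ p.length := by
    intro x y0 p
    induction p with
    | nil => simp [h0]
    | cons h q ih =>
        rename_i u v w; have := hlip u v w h
        simp only [SimpleGraph.Walk.length_cons]
        omega
  refine ⟨fun x y => ⟨(key _ x y rfl).choose⟩, fun x y => ?_⟩
  obtain ⟨p, hp⟩ := key _ x y rfl
  have h1 : G.dist x y ≤ D x y := hp ▸ SimpleGraph.dist_le p
  obtain ⟨q, hq⟩ := SimpleGraph.Reachable.exists_walk_length_eq_dist ⟨p⟩
  have h2 := hLB x y q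
  omega

private theorem edge_mem_of_walk {V : Type*} {G : SimpleGraph V} (c : V → Bool) (e : Sym2 V)
    (h : ∀ u w, G.Adj u w → c u ≠ c w → s(u, w) = e) :
    ∀ {u u'} (p : G.Walk u u'), c u ≠ c u' → e ∈ p.edges := by
  intro u u' p
  induction p with
  | nil => intro h'; exact absurd rfl h'
  | @cons u v w hadj q ih =>
    intro hne
    by_cases hcv : c u = c v
    · have : c v ≠ c w := fun hh => hne (hcv.trans hh)
      simp only [SimpleGraph.Walk.edges_cons, List.mem_cons]
      exact Or.inr (ih this)
    · rw [← h u v hadj hcv]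
      simp


section Gadget

variable (m : ℕ) (a : Fin (3 * m) → ℕ) (f : Fin (3 * m) → Fin m)

private abbrev TGV := Unit ⊕ Fin m ⊕ Fin (3 * m) ⊕ Σ i : Fin (3 * m), Fin (a i)

private def TGroot : TGV m a := Sum.inl ()

private def TGpa : TGV m a → TGV m a
  | Sum.inl _ => Sum.inl ()
  | Sum.inr (Sum.inl _) => Sum.inl ()
  | Sum.inr (Sum.inr (Sum.inl i)) => Sum.inr (Sum.inl (f i))
  | Sum.inr (Sum.inr (Sum.inr p)) => Sum.inr (Sum.inr (Sum.inl p.1))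

private def TGG : SimpleGraph (TGV m a) where
  Adj x y := (x ≠ TGroot m a ∧ y = TGpa m a f x) ∨ (y ≠ TGroot m a ∧ x = TGpa m a f y)
  symm := ⟨fun x y h => by tauto⟩
  loopless := ⟨by
    rintro x (⟨h1, h2⟩ | ⟨h1, h2⟩) <;>
      rcases x with u | (j | (i | p)) <;>
        first
          | exact h1 rfl
          | simp [TGpa] at h2⟩

private def TGbelow : TGV m a → TGV m a → Bool
  | Sum.inl _, _ => true
  | Sum.inr (Sum.inl _), Sum.inl _ => false
  | Sum.inr (Sum.inl j), Sum.inr (Sum.inl j') => decide (j' = j)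
  | Sum.inr (Sum.inl j), Sum.inr (Sum.inr (Sum.inl i)) => decide (f i = j)
  | Sum.inr (Sum.inl j), Sum.inr (Sum.inr (Sum.inr p)) => decide (f p.1 = j)
  | Sum.inr (Sum.inr (Sum.inl _)), Sum.inl _ => false
  | Sum.inr (Sum.inr (Sum.inl _)), Sum.inr (Sum.inl _) => false
  | Sum.inr (Sum.inr (Sum.inl i)), Sum.inr (Sum.inr (Sum.inl i')) => decide (i' = i)
  | Sum.inr (Sum.inr (Sum.inl i)), Sum.inr (Sum.inr (Sum.inr p)) => decide (p.1 = i)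
  | Sum.inr (Sum.inr (Sum.inr _)), Sum.inl _ => false
  | Sum.inr (Sum.inr (Sum.inr _)), Sum.inr (Sum.inl _) => false
  | Sum.inr (Sum.inr (Sum.inr _)), Sum.inr (Sum.inr (Sum.inl _)) => false
  | Sum.inr (Sum.inr (Sum.inr p)), Sum.inr (Sum.inr (Sum.inr q)) => decide (q = p)

private theorem TGbelow_self (x : TGV m a) : TGbelow m a f x x = true := by
  rcases x with _ | (j | (i | p)) <;> simp [TGbelow]

private theorem TGbelow_pa (x : TGV m a) (hx : x ≠ TGroot m a) :
    TGbelow m a f x (TGpa m a f x) = false := by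
  rcases x with _ | (j | (i | p)) <;> simp_all [TGbelow, TGpa, TGroot]

private theorem TGbelow_step (x u : TGV m a) (hu : u ≠ x) :
    TGbelow m a f x u = TGbelow m a f x (TGpa m a f u) := by
  rcases x with _ | (j | (i | p)) <;> rcases u with _ | (j' | (i' | q)) <;>
    simp_all [TGbelow, TGpa, TGroot]

private theorem TGacyclic : (TGG m a f).IsAcyclic := by
  rw [SimpleGraph.isAcyclic_iff_forall_adj_isBridge]
  have key : ∀ x : TGV m a, x ≠ TGroot m a →
      (TGG m a f).IsBridge s(x, TGpa m a f x) := by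
    intro x hx
    rw [SimpleGraph.isBridge_iff_adj_and_forall_walk_mem_edges]
    · intro p
      refine edge_mem_of_walk (TGbelow m a f x) _ ?_ p ?_
      · rintro u w (⟨h1, h2⟩ | ⟨h1, h2⟩) hne
        · have hux : u = x := by
            by_contra huc
            exact hne (h2 ▸ TGbelow_step m a f x u huc)
          subst hux; rw [h2]
        · have hux : w = x := by
            by_contra huc
            exact (hne (h2 ▸ TGbelow_step m a f x w huc).symm)
          subst hux; rw [h2, Sym2.eq_swap]
      · rw [TGbelow_self, TGbelow_pa m a f x hx]; simp
  rintro v w (⟨h1, h2⟩ | ⟨h1, h2⟩)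
  · exact h2 ▸ key v h1
  · rw [Sym2.eq_swap]; exact h2 ▸ key w h1

end Gadget


section GadgetD

variable (m : ℕ) (a : Fin (3 * m) → ℕ) (f : Fin (3 * m) → Fin m)

private def TGD : TGV m a → TGV m a → ℕ
  | Sum.inl _, Sum.inl _ => 0
  | Sum.inl _, Sum.inr (Sum.inl _) => 1
  | Sum.inl _, Sum.inr (Sum.inr (Sum.inl _)) => 2
  | Sum.inl _, Sum.inr (Sum.inr (Sum.inr _)) => 3
  | Sum.inr (Sum.inl _), Sum.inl _ => 1
  | Sum.inr (Sum.inl j), Sum.inr (Sum.inl j') => if j = j' then 0 else 2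
  | Sum.inr (Sum.inl j), Sum.inr (Sum.inr (Sum.inl i)) => if f i = j then 1 else 3
  | Sum.inr (Sum.inl j), Sum.inr (Sum.inr (Sum.inr q)) => if f q.1 = j then 2 else 4
  | Sum.inr (Sum.inr (Sum.inl _)), Sum.inl _ => 2
  | Sum.inr (Sum.inr (Sum.inl i)), Sum.inr (Sum.inl j) => if f i = j then 1 else 3
  | Sum.inr (Sum.inr (Sum.inl i)), Sum.inr (Sum.inr (Sum.inl i')) =>
      if i = i' then 0 else if f i = f i' then 2 else 4
  | Sum.inr (Sum.inr (Sum.inl i)), Sum.inr (Sum.inr (Sum.inr q)) =>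
      if i = q.1 then 1 else if f i = f q.1 then 3 else 5
  | Sum.inr (Sum.inr (Sum.inr _)), Sum.inl _ => 3
  | Sum.inr (Sum.inr (Sum.inr p)), Sum.inr (Sum.inl j) => if f p.1 = j then 2 else 4
  | Sum.inr (Sum.inr (Sum.inr p)), Sum.inr (Sum.inr (Sum.inl i)) =>
      if p.1 = i then 1 else if f p.1 = f i then 3 else 5
  | Sum.inr (Sum.inr (Sum.inr p)), Sum.inr (Sum.inr (Sum.inr q)) =>
      if p = q then 0 else if p.1 = q.1 then 2 else if f p.1 = f q.1 then 4 else 6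

private theorem TGD_self (x : TGV m a) : TGD m a f x x = 0 := by
  rcases x with _ | (j | (i | p)) <;> simp [TGD]

private theorem TGD_lip (c y : TGV m a) (hc : c ≠ TGroot m a) :
    TGD m a f c y ≤ TGD m a f (TGpa m a f c) y + 1 ∧
    TGD m a f (TGpa m a f c) y ≤ TGD m a f c y + 1 := by
  rcases c with ⟨⟩ | (j | (i | p))
  · exact absurd rfl hc
  all_goals
    rcases y with ⟨⟩ | (j' | (i' | q)) <;>
      simp only [TGD, TGpa] <;>
      constructor <;>
      (try split_ifs) <;>
      first
        | omega
        | simp_all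

private theorem TGD_step (x y : TGV m a) (hxy : x ≠ y) :
    ∃ z, (TGG m a f).Adj x z ∧ TGD m a f z y + 1 = TGD m a f x y := by
  have adjpa : ∀ c : TGV m a, c ≠ TGroot m a → (TGG m a f).Adj c (TGpa m a f c) :=
    fun c hc => Or.inl ⟨hc, rfl⟩
  have adjpa' : ∀ c : TGV m a, c ≠ TGroot m a → (TGG m a f).Adj (TGpa m a f c) c :=
    fun c hc => Or.inr ⟨hc, rfl⟩
  have hne : ∀ w : Fin m ⊕ Fin (3 * m) ⊕ Σ i : Fin (3 * m), Fin (a i),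
      (Sum.inr w : TGV m a) ≠ TGroot m a := by
    intro w h
    simp [TGroot] at h
  rcases x with u | (j | (i | p))
  · -- x = root
    cases u
    rcases y with u' | (j' | (i' | q))
    · cases u'; exact absurd rfl hxy
    · exact ⟨Sum.inr (Sum.inl j'), adjpa' (Sum.inr (Sum.inl j')) (hne _), by simp [TGD]⟩
    · exact ⟨Sum.inr (Sum.inl (f i')), adjpa' (Sum.inr (Sum.inl (f i'))) (hne _), by simp [TGD]⟩
    · exact ⟨Sum.inr (Sum.inl (f q.1)), adjpa' (Sum.inr (Sum.inl (f q.1))) (hne _), by simp [TGD]⟩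
  · -- x = t j
    rcases y with ⟨⟩ | (j' | (i' | q))
    · exact ⟨Sum.inl (), adjpa _ (hne _), by simp [TGD]⟩
    · have hjj : j ≠ j' := fun h => hxy (by rw [h])
      exact ⟨Sum.inl (), adjpa _ (hne _), by simp [TGD, hjj]⟩
    · by_cases hc : f i' = j
      · refine ⟨Sum.inr (Sum.inr (Sum.inl i')), ?_, by simp [TGD, hc]⟩
        have := adjpa' (Sum.inr (Sum.inr (Sum.inl i'))) (hne _)
        rwa [show TGpa m a f (Sum.inr (Sum.inr (Sum.inl i'))) =
          Sum.inr (Sum.inl j) by simp [TGpa, hc]] at this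
      · exact ⟨Sum.inl (), adjpa _ (hne _), by simp [TGD, hc]⟩
    · by_cases hc : f q.1 = j
      · refine ⟨Sum.inr (Sum.inr (Sum.inl q.1)), ?_, by simp [TGD, hc]⟩
        have := adjpa' (Sum.inr (Sum.inr (Sum.inl q.1))) (hne _)
        rwa [show TGpa m a f (Sum.inr (Sum.inr (Sum.inl q.1))) =
          Sum.inr (Sum.inl j) by simp [TGpa, hc]] at this
      · exact ⟨Sum.inl (), adjpa _ (hne _), by simp [TGD, hc]⟩
  · -- x = v i
    rcases y with ⟨⟩ | (j' | (i' | q))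
    · exact ⟨Sum.inr (Sum.inl (f i)), adjpa _ (hne _), by simp [TGD]⟩
    · by_cases hc : f i = j'
      · exact ⟨Sum.inr (Sum.inl (f i)), adjpa _ (hne _), by simp [TGD, hc]⟩
      · exact ⟨Sum.inr (Sum.inl (f i)), adjpa _ (hne _), by simp [TGD, hc]⟩
    · have hii : i ≠ i' := fun h => hxy (by rw [h])
      refine ⟨Sum.inr (Sum.inl (f i)), adjpa _ (hne _), ?_⟩
      rcases eq_or_ne (f i) (f i') with hff | hff
      · simp [TGD, hii, hff]
      · simp [TGD, hii, hff, Ne.symm hff]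
    · by_cases hiq : i = q.1
      · refine ⟨Sum.inr (Sum.inr (Sum.inr q)), ?_, by simp [TGD, hiq]⟩
        have := adjpa' (Sum.inr (Sum.inr (Sum.inr q))) (hne _)
        rwa [show TGpa m a f (Sum.inr (Sum.inr (Sum.inr q))) =
          Sum.inr (Sum.inr (Sum.inl i)) by simp [TGpa, hiq]] at this
      · refine ⟨Sum.inr (Sum.inl (f i)), adjpa _ (hne _), ?_⟩
        rcases eq_or_ne (f i) (f q.1) with hff | hff
        · simp [TGD, hiq, hff]
        · simp [TGD, hiq, hff, Ne.symm hff]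
  · -- x = leaf p
    have hadj := adjpa (Sum.inr (Sum.inr (Sum.inr p))) (hne _)
    rcases y with ⟨⟩ | (j' | (i' | q))
    · exact ⟨_, hadj, by simp [TGD, TGpa]⟩
    · by_cases hc : f p.1 = j' <;>
        exact ⟨_, hadj, by simp [TGD, TGpa, hc]⟩
    · by_cases hc : p.1 = i'
      · exact ⟨_, hadj, by simp [TGD, TGpa, hc]⟩
      · rcases eq_or_ne (f p.1) (f i') with hff | hff <;>
          exact ⟨_, hadj, by simp [TGD, TGpa, hc, hff]⟩
    · have hpq : p ≠ q := fun h => hxy (by rw [h])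
      by_cases hc : p.1 = q.1
      · exact ⟨_, hadj, by simp [TGD, TGpa, hpq, hc]⟩
      · rcases eq_or_ne (f p.1) (f q.1) with hff | hff <;>
          exact ⟨_, hadj, by simp [TGD, TGpa, hpq, hc, hff]⟩

end GadgetD


section StatusComp

variable (m B : ℕ) (a : Fin (3 * m) → ℕ) (f : Fin (3 * m) → Fin m)

private theorem hsplitZ {M : Type*} [AddCommMonoid M] (g : TGV m a → M) :
    ∑ u : TGV m a, g u =
      g (Sum.inl ()) + (∑ j : Fin m, g (Sum.inr (Sum.inl j))) +
      (∑ i, g (Sum.inr (Sum.inr (Sum.inl i)))) +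
      ∑ i, ∑ k : Fin (a i), g (Sum.inr (Sum.inr (Sum.inr ⟨i, k⟩))) := by
  rw [Fintype.sum_sum_type, Fintype.sum_sum_type, Fintype.sum_sum_type,
    ← Finset.univ_sigma_univ, Finset.sum_sigma]
  rw [Fintype.sum_unique]
  abel

variable (A : ℕ) (hA : A = ∑ i, a i)
  (hf : ∀ t : Fin m,
      (Finset.univ.filter (fun i => f i = t)).card = 3 ∧
      ∑ i ∈ Finset.univ.filter (fun i => f i = t), a i = B)

include hA in
private theorem zA : (A : ℤ) = ∑ i, (a i : ℤ) := by
  rw [hA]; push_cast; rfl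

include hf in
private theorem H1c (c : ℤ) (j : Fin m) :
    ∑ i, (if f i = j then c else 0) = 3 * c := by
  have h : ∀ i : Fin (3 * m), (if f i = j then c else 0)
      = c * (if f i = j then 1 else 0) := by
    intro i; split_ifs <;> ring
  rw [Finset.sum_congr rfl (fun i _ => h i), ← Finset.mul_sum, Finset.sum_boole, (hf j).1]
  push_cast; ring

include hf in
private theorem H2c (c : ℤ) (j : Fin m) :
    ∑ i, (if f i = j then c * (a i : ℤ) else 0) = c * B := by
  have h : ∀ i : Fin (3 * m), (if f i = j then c * (a i : ℤ) else 0)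
      = c * (if f i = j then (a i : ℤ) else 0) := by
    intro i; split_ifs <;> ring
  rw [Finset.sum_congr rfl (fun i _ => h i), ← Finset.mul_sum, ← Finset.sum_filter]
  rw [show (∑ i ∈ Finset.univ.filter (fun i => f i = j), (a i : ℤ))
      = ((∑ i ∈ Finset.univ.filter (fun i => f i = j), a i : ℕ) : ℤ) by push_cast; rfl]
  rw [(hf j).2]

private theorem Hvc (c : ℤ) (i₀ : Fin (3 * m)) :
    ∑ i, (if i₀ = i then c else 0) = c := by
  rw [Finset.sum_ite_eq]; simp

private theorem Hmc (c : ℤ) (j : Fin m) :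
    ∑ j' : Fin m, (if j = j' then c else 0) = c := by
  rw [Finset.sum_ite_eq]; simp

include hA hf in
private theorem Sroot :
    (∑ u : TGV m a, (TGD m a f (Sum.inl ()) u : ℤ)) = 3 * A + 7 * m := by
  rw [hsplitZ]
  simp only [TGD, Finset.sum_const, Finset.card_univ, Fintype.card_fin, nsmul_eq_mul]
  rw [← Finset.sum_mul, ← zA m a A hA]
  push_cast
  ring

include hA hf in
private theorem St (j : Fin m) :
    (∑ u : TGV m a, (TGD m a f (Sum.inr (Sum.inl j)) u : ℤ)) =
      4 * A - 2 * B + 11 * m - 7 := by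
  rw [hsplitZ]
  simp only [TGD]
  push_cast
  have e1 : ∑ j' : Fin m, (if j = j' then (0 : ℤ) else 2) = 2 * m - 2 := by
    have h : ∀ j' : Fin m, (if j = j' then (0 : ℤ) else 2)
        = 2 - (if j = j' then (2 : ℤ) else 0) := by
      intro j'; split_ifs <;> ring
    rw [Finset.sum_congr rfl (fun j' _ => h j'), Finset.sum_sub_distrib,
      Finset.sum_const, Hmc m (2 : ℤ) j]
    simp only [Finset.card_univ, Fintype.card_fin, nsmul_eq_mul]
    push_cast; ring
  have e2 : ∑ i, (if f i = j then (1 : ℤ) else 3) = 9 * m - 6 := by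
    have h : ∀ i : Fin (3 * m), (if f i = j then (1 : ℤ) else 3)
        = 3 - (if f i = j then (2 : ℤ) else 0) := by
      intro i; split_ifs <;> ring
    rw [Finset.sum_congr rfl (fun i _ => h i), Finset.sum_sub_distrib,
      Finset.sum_const, H1c m B a f hf (2 : ℤ) j]
    simp only [Finset.card_univ, Fintype.card_fin, nsmul_eq_mul]
    push_cast; ring
  have e3 : ∑ i, ∑ _k : Fin (a i), (if f i = j then (2 : ℤ) else 4)
      = 4 * A - 2 * B := by
    have h : ∀ i : Fin (3 * m), ∑ _k : Fin (a i), (if f i = j then (2 : ℤ) else 4)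
        = 4 * (a i) - (if f i = j then 2 * (a i : ℤ) else 0) := by
      intro i
      rw [Finset.sum_const, Finset.card_univ, Fintype.card_fin, nsmul_eq_mul]
      split_ifs <;> ring
    rw [Finset.sum_congr rfl (fun i _ => h i), Finset.sum_sub_distrib,
      ← Finset.mul_sum, ← zA m a A hA, H2c m B a f hf (2 : ℤ) j]
    try ring
  rw [e1, e2, e3]
  try ring

include hA hf in
private theorem Sv (i₀ : Fin (3 * m)) :
    (∑ u : TGV m a, (TGD m a f (Sum.inr (Sum.inr (Sum.inl i₀))) u : ℤ)) =
      5 * A - 2 * B - 2 * (a i₀) + 15 * m - 8 := by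
  rw [hsplitZ]
  simp only [TGD]
  push_cast
  have e1 : ∑ j : Fin m, (if f i₀ = j then (1 : ℤ) else 3) = 3 * m - 2 := by
    have h : ∀ j : Fin m, (if f i₀ = j then (1 : ℤ) else 3)
        = 3 - (if f i₀ = j then (2 : ℤ) else 0) := by
      intro j; split_ifs <;> ring
    rw [Finset.sum_congr rfl (fun j _ => h j), Finset.sum_sub_distrib,
      Finset.sum_const, Hmc m (2 : ℤ) (f i₀)]
    simp only [Finset.card_univ, Fintype.card_fin, nsmul_eq_mul]
    push_cast; ring
  have e2 : ∑ i, (if i₀ = i then (0 : ℤ) else if f i₀ = f i then 2 else 4)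
      = 12 * m - 8 := by
    have h : ∀ i : Fin (3 * m), (if i₀ = i then (0 : ℤ) else if f i₀ = f i then 2 else 4)
        = 4 - (if f i = f i₀ then (2 : ℤ) else 0) - (if i₀ = i then (2 : ℤ) else 0) := by
      intro i
      by_cases h1 : i₀ = i
      · subst h1; simp
      · by_cases h2 : f i₀ = f i
        · rw [if_neg h1, if_pos h2, if_pos h2.symm, if_neg h1]; ring
        · rw [if_neg h1, if_neg h2, if_neg (fun hh : f i = f i₀ => h2 hh.symm), if_neg h1]
          ring
    rw [Finset.sum_congr rfl (fun i _ => h i), Finset.sum_sub_distrib,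
      Finset.sum_sub_distrib, Finset.sum_const, H1c m B a f hf (2 : ℤ) (f i₀),
      Hvc m (2 : ℤ) i₀]
    simp only [Finset.card_univ, Fintype.card_fin, nsmul_eq_mul]
    push_cast; ring
  have e3 : ∑ i, ∑ _k : Fin (a i),
      (if i₀ = i then (1 : ℤ) else if f i₀ = f i then 3 else 5)
      = 5 * A - 2 * B - 2 * (a i₀) := by
    have h : ∀ i : Fin (3 * m), ∑ _k : Fin (a i),
        (if i₀ = i then (1 : ℤ) else if f i₀ = f i then 3 else 5)
        = 5 * (a i) - (if f i = f i₀ then 2 * (a i : ℤ) else 0)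
          - (if i₀ = i then 2 * (a i : ℤ) else 0) := by
      intro i
      rw [Finset.sum_const, Finset.card_univ, Fintype.card_fin, nsmul_eq_mul]
      by_cases h1 : i₀ = i
      · subst h1; simp; ring
      · by_cases h2 : f i₀ = f i
        · rw [if_neg h1, if_pos h2, if_pos h2.symm, if_neg h1]; ring
        · rw [if_neg h1, if_neg h2, if_neg (fun hh : f i = f i₀ => h2 hh.symm), if_neg h1]
          ring
    have hv : ∑ i, (if i₀ = i then 2 * (a i : ℤ) else 0) = 2 * (a i₀ : ℤ) := by
      rw [Finset.sum_ite_eq]; simp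
    rw [Finset.sum_congr rfl (fun i _ => h i), Finset.sum_sub_distrib,
      Finset.sum_sub_distrib, ← Finset.mul_sum, ← zA m a A hA,
      H2c m B a f hf (2 : ℤ) (f i₀), hv]
    try ring
  rw [e1, e2, e3]
  try ring

include hA hf in
private theorem Sl (p : Σ i : Fin (3 * m), Fin (a i)) :
    (∑ u : TGV m a, (TGD m a f (Sum.inr (Sum.inr (Sum.inr p))) u : ℤ)) =
      6 * A - 2 * B - 2 * (a p.1) + 19 * m - 9 := by
  rw [hsplitZ]
  simp only [TGD]
  push_cast
  have e1 : ∑ j : Fin m, (if f p.1 = j then (2 : ℤ) else 4) = 4 * m - 2 := by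
    have h : ∀ j : Fin m, (if f p.1 = j then (2 : ℤ) else 4)
        = 4 - (if f p.1 = j then (2 : ℤ) else 0) := by
      intro j; split_ifs <;> ring
    rw [Finset.sum_congr rfl (fun j _ => h j), Finset.sum_sub_distrib,
      Finset.sum_const, Hmc m (2 : ℤ) (f p.1)]
    simp only [Finset.card_univ, Fintype.card_fin, nsmul_eq_mul]
    push_cast; ring
  have e2 : ∑ i, (if p.1 = i then (1 : ℤ) else if f p.1 = f i then 3 else 5)
      = 15 * m - 8 := by
    have h : ∀ i : Fin (3 * m), (if p.1 = i then (1 : ℤ) else if f p.1 = f i then 3 else 5)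
        = 5 - (if f i = f p.1 then (2 : ℤ) else 0) - (if p.1 = i then (2 : ℤ) else 0) := by
      intro i
      by_cases h1 : p.1 = i
      · subst h1; simp
      · by_cases h2 : f p.1 = f i
        · rw [if_neg h1, if_pos h2, if_pos h2.symm, if_neg h1]; ring
        · rw [if_neg h1, if_neg h2, if_neg (fun hh : f i = f p.1 => h2 hh.symm), if_neg h1]
          ring
    rw [Finset.sum_congr rfl (fun i _ => h i), Finset.sum_sub_distrib,
      Finset.sum_sub_distrib, Finset.sum_const, H1c m B a f hf (2 : ℤ) (f p.1),
      Hvc m (2 : ℤ) p.1]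
    simp only [Finset.card_univ, Fintype.card_fin, nsmul_eq_mul]
    push_cast; ring
  have e3 : ∑ i, ∑ k : Fin (a i),
      (if p = ⟨i, k⟩ then (0 : ℤ) else if p.1 = i then 2 else if f p.1 = f i then 4 else 6)
      = 6 * A - 2 * B - 2 * (a p.1) - 2 := by
    have h : ∀ (i : Fin (3 * m)) (k : Fin (a i)),
        (if p = ⟨i, k⟩ then (0 : ℤ) else if p.1 = i then 2 else if f p.1 = f i then 4 else 6)
        = 6 - (if f i = f p.1 then (2 : ℤ) else 0) - (if p.1 = i then (2 : ℤ) else 0)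
          - (if p = ⟨i, k⟩ then (2 : ℤ) else 0) := by
      intro i k
      by_cases h0 : p = ⟨i, k⟩
      · have h1 : p.1 = i := by rw [h0]
        have h2 : f i = f p.1 := by rw [h1]
        rw [if_pos h0, if_pos h2, if_pos h1, if_pos h0]; ring
      · rw [if_neg h0]
        by_cases h1 : p.1 = i
        · have h2 : f i = f p.1 := by rw [h1]
          rw [if_pos h1, if_pos h2, if_pos h1, if_neg h0]; ring
        · by_cases h2 : f p.1 = f i
          · rw [if_neg h1, if_pos h2, if_pos h2.symm, if_neg h1, if_neg h0]; ring
          · rw [if_neg h1, if_neg h2, if_neg (fun hh : f i = f p.1 => h2 hh.symm),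
              if_neg h1, if_neg h0]
            ring
    have hsum0 : ∑ i, ∑ k : Fin (a i), (if p = ⟨i, k⟩ then (2 : ℤ) else 0) = 2 := by
      rw [← Finset.sum_sigma (Finset.univ) (fun _ => Finset.univ)
        (fun q => if p = q then (2 : ℤ) else 0)]
      rw [Finset.univ_sigma_univ, Finset.sum_ite_eq]
      simp
    have hsum1 : ∑ i, ∑ _k : Fin (a i), (if p.1 = i then (2 : ℤ) else 0)
        = 2 * (a p.1 : ℤ) := by
      have h' : ∀ i : Fin (3 * m), ∑ _k : Fin (a i), (if p.1 = i then (2 : ℤ) else 0)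
          = if p.1 = i then 2 * (a i : ℤ) else 0 := by
        intro i
        rw [Finset.sum_const, Finset.card_univ, Fintype.card_fin, nsmul_eq_mul]
        split_ifs <;> ring
      rw [Finset.sum_congr rfl (fun i _ => h' i), Finset.sum_ite_eq]
      simp
    have hsum2 : ∑ i, ∑ _k : Fin (a i), (if f i = f p.1 then (2 : ℤ) else 0)
        = 2 * B := by
      have h' : ∀ i : Fin (3 * m), ∑ _k : Fin (a i), (if f i = f p.1 then (2 : ℤ) else 0)
          = if f i = f p.1 then 2 * (a i : ℤ) else 0 := by
        intro i
        rw [Finset.sum_const, Finset.card_univ, Fintype.card_fin, nsmul_eq_mul]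
        split_ifs <;> ring
      rw [Finset.sum_congr rfl (fun i _ => h' i), H2c m B a f hf (2 : ℤ) (f p.1)]
    have hsum3 : ∑ i : Fin (3 * m), ∑ _k : Fin (a i), (6 : ℤ) = 6 * A := by
      have h' : ∀ i : Fin (3 * m), ∑ _k : Fin (a i), (6 : ℤ) = 6 * (a i) := by
        intro i
        rw [Finset.sum_const, Finset.card_univ, Fintype.card_fin, nsmul_eq_mul]
        ring
      rw [Finset.sum_congr rfl (fun i _ => h' i), ← Finset.mul_sum, ← zA m a A hA]
    rw [Finset.sum_congr rfl (fun i _ => Finset.sum_congr rfl (fun k _ => h i k))]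
    simp only [Finset.sum_sub_distrib]
    rw [hsum0, hsum1, hsum2, hsum3]
    try ring
  rw [e1, e2, e3]
  try ring

end StatusComp

private theorem map_univ_eq_sum_singleton {α : Type*} [Fintype α] (g : α → ℤ) :
    Multiset.map g Finset.univ.val = ∑ x : α, ({g x} : Multiset ℤ) := by
  rw [show (∑ x : α, ({g x} : Multiset ℤ))
      = (Finset.univ.val.map (fun x => ({g x} : Multiset ℤ))).sum from rfl]
  rw [show (Finset.univ.val.map (fun x => ({g x} : Multiset ℤ)))
      = ((Finset.univ.val.map g).map (fun y => ({y} : Multiset ℤ))) by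
    rw [Multiset.map_map]; rfl]
  rw [Multiset.sum_map_singleton]

theorem exists_tree_of_three_partition (m B : ℕ) (hm : 1 ≤ m)
    (a : Fin (3 * m) → ℕ) (ha : ∀ i, 1 ≤ a i)
    (A : ℕ) (hA : A = ∑ i, a i) (hAB : A = m * B)
    (f : Fin (3 * m) → Fin m)
    (hf : ∀ t : Fin m,
      (Finset.univ.filter (fun i => f i = t)).card = 3 ∧
      ∑ i ∈ Finset.univ.filter (fun i => f i = t), a i = B) :
    ∃ G : SimpleGraph (Fin (1 + m + 3 * m + A)),
      G.IsTree ∧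
      G.statusSequenceZ =
        ({(3 * A + 7 * m : ℤ)} : Multiset ℤ) +
        Multiset.replicate m ((4 * A : ℤ) - 2 * B + 11 * m - 7) +
        Finset.univ.val.map
          (fun i : Fin (3 * m) => ((5 * A : ℤ) - 2 * B - 2 * (a i) + 15 * m - 8)) +
        ∑ i : Fin (3 * m),
          Multiset.replicate (a i) ((6 * A : ℤ) - 2 * B - 2 * (a i) + 19 * m - 9) := by
  classical
  have h0 := TGD_self m a f
  have hstep := TGD_step m a f
  have hlip : ∀ x z y, (TGG m a f).Adj x z →
      TGD m a f x y ≤ TGD m a f z y + 1 := by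
    rintro x z y (⟨h1, h2⟩ | ⟨h1, h2⟩)
    · exact h2 ▸ (TGD_lip m a f x y h1).1
    · exact h2 ▸ (TGD_lip m a f z y h1).2
  obtain ⟨hreach, _⟩ :=
    dist_eq_of_potential (TGG m a f) (TGD m a f) h0 hstep hlip
  -- the equivalence
  have hcardV : Fintype.card (Fin (1 + m + 3 * m + A)) = Fintype.card (TGV m a) := by
    simp only [Fintype.card_fin, TGV, Fintype.card_sum, Fintype.card_unit,
      Fintype.card_sigma, Fintype.card_fin]
    rw [hA]
    ring
  let e : Fin (1 + m + 3 * m + A) ≃ TGV m a := Fintype.equivOfCardEq hcardV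
  set G : SimpleGraph (Fin (1 + m + 3 * m + A)) := (TGG m a f).comap e.toEmbedding with hG
  let φ : G ≃g TGG m a f := SimpleGraph.Iso.comap e (TGG m a f)
  have hφ : ∀ x, φ x = e x := fun _ => rfl
  refine ⟨G, ⟨?_, ?_⟩, ?_⟩
  · -- connected
    rw [SimpleGraph.connected_iff]
    constructor
    · intro x y
      have h := hreach (e x) (e y)
      rwa [show (e x) = φ x from rfl, show (e y) = φ y from rfl,
        SimpleGraph.Iso.reachable_iff] at h
    · exact ⟨⟨0, by omega⟩⟩
  · -- acyclic
    intro v c hc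
    have hinj : Function.Injective (φ.toHom : Fin (1 + m + 3 * m + A) → TGV m a) :=
      fun x y hxy => by
        have : e x = e y := hxy
        exact e.injective this
    exact TGacyclic m a f _ (hc.map hinj)
  · -- status sequence
    obtain ⟨_, hdist⟩ := dist_eq_of_potential G (fun x y => TGD m a f (e x) (e y))
      (fun x => h0 _)
      (by
        intro x y hxy
        obtain ⟨z, hz1, hz2⟩ := hstep (e x) (e y) (fun h => hxy (e.injective h))
        refine ⟨e.symm z, ?_, ?_⟩
        · show (TGG m a f).Adj (e x) (e (e.symm z))
          rwa [Equiv.apply_symm_apply]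
        · show TGD m a f (e (e.symm z)) (e y) + 1 = TGD m a f (e x) (e y)
          rw [Equiv.apply_symm_apply]; exact hz2)
      (by
        intro x z y hadj
        exact hlip (e x) (e z) (e y) hadj)
    have hstatus : ∀ x, (G.status x : ℤ) = ∑ u : TGV m a, (TGD m a f (e x) u : ℤ) := by
      intro x
      rw [SimpleGraph.status, Nat.cast_sum]
      rw [show (∑ u : Fin (1 + m + 3 * m + A), (G.dist x u : ℤ))
          = ∑ u : Fin (1 + m + 3 * m + A), (TGD m a f (e x) (e u) : ℤ) from
        Finset.sum_congr rfl fun u _ => by rw [hdist]]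
      exact Equiv.sum_comp e (fun w => (TGD m a f (e x) w : ℤ))
    rw [SimpleGraph.statusSequenceZ]
    rw [show (Finset.univ.val.map (fun v => (G.status v : ℤ)))
        = Finset.univ.val.map ((fun w : TGV m a => ∑ u : TGV m a, (TGD m a f w u : ℤ)) ∘ e)
        from Multiset.map_congr rfl fun x _ => hstatus x]
    rw [← Multiset.map_map (fun w : TGV m a => ∑ u : TGV m a, (TGD m a f w u : ℤ)) e]
    rw [show Finset.univ.val.map e = Finset.univ.val by
      rw [show (Finset.univ.val.map ⇑e) = (Finset.univ.map e.toEmbedding).val from rfl,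
        Finset.map_univ_equiv]]
    rw [map_univ_eq_sum_singleton]
    rw [hsplitZ m a]
    rw [Sroot m B a f A hA hf]
    rw [show (∑ j : Fin m,
          ({(∑ u : TGV m a, (TGD m a f (Sum.inr (Sum.inl j)) u : ℤ))} : Multiset ℤ))
        = ∑ j : Fin m, ({((4 * A : ℤ) - 2 * B + 11 * m - 7)} : Multiset ℤ) from
      Finset.sum_congr rfl fun j _ => by rw [St m B a f A hA hf j]]
    rw [show (∑ i : Fin (3 * m),
          ({(∑ u : TGV m a, (TGD m a f (Sum.inr (Sum.inr (Sum.inl i))) u : ℤ))} : Multiset ℤ))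
        = ∑ i : Fin (3 * m),
          ({((5 * A : ℤ) - 2 * B - 2 * (a i) + 15 * m - 8)} : Multiset ℤ) from
      Finset.sum_congr rfl fun i _ => by rw [Sv m B a f A hA hf i]]
    rw [show (∑ i : Fin (3 * m), ∑ k : Fin (a i),
          ({(∑ u : TGV m a, (TGD m a f (Sum.inr (Sum.inr (Sum.inr ⟨i, k⟩))) u : ℤ))} : Multiset ℤ))
        = ∑ i : Fin (3 * m), ∑ _k : Fin (a i),
          ({((6 * A : ℤ) - 2 * B - 2 * (a i) + 19 * m - 9)} : Multiset ℤ) from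
      Finset.sum_congr rfl fun i _ => Finset.sum_congr rfl fun k _ => by
        rw [Sl m B a f A hA hf ⟨i, k⟩]]
    congr 1
    · congr 1
      · congr 1
        rw [Finset.sum_const, Finset.card_univ, Fintype.card_fin,
          Multiset.nsmul_singleton]
      · rw [← map_univ_eq_sum_singleton]
        try rfl
    · refine Finset.sum_congr rfl fun i _ => ?_
      rw [Finset.sum_const, Finset.card_univ, Fintype.card_fin,
        Multiset.nsmul_singleton]
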